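/- Let L be a diffusion generator with constant positive-semidefinite diffusion matrix D, and let C be a linear (first-order differential) operator. For Φ(f) = |Cf|²/f, the generalized Γ operator satisfies the pointwise lower bound Γ_Φ(f) ≥ (Cf·[L,C]f)/f for any positive smooth f. -/

import Mathlib

open scoped RealInnerProductSpace

noncomputable section

/-- Diffusion generator `Lf = b·∇f + ∇·(D∇f)` with constant diffusion matrix `D`. -/
def Lgen (n : ℕ) (b : EuclideanSpace ℝ (Fin n) → EuclideanSpace ℝ (Fin n))
    (Dm : Matrix (Fin n) (Fin n) ℝ) (f : EuclideanSpace ℝ (Fin n) → ℝ)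
    (x : EuclideanSpace ℝ (Fin n)) : ℝ :=
  ⟪b x, gradient f x⟫ + ∑ i : Fin n, ∑ j : Fin n,
    Dm i j * iteratedFDeriv ℝ 2 f x ![EuclideanSpace.single i 1, EuclideanSpace.single j 1]

lemma Lgen_eq {n : ℕ} (b : EuclideanSpace ℝ (Fin n) → EuclideanSpace ℝ (Fin n))
    (Dm : Matrix (Fin n) (Fin n) ℝ) (u : EuclideanSpace ℝ (Fin n) → ℝ)
    (x : EuclideanSpace ℝ (Fin n)) :
    Lgen n b Dm u x = fderiv ℝ u x (b x) + ∑ i : Fin n, ∑ j : Fin n,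
      Dm i j * fderiv ℝ (fderiv ℝ u) x (EuclideanSpace.single i 1) (EuclideanSpace.single j 1) := by
  unfold Lgen gradient
  congr 1
  · rw [real_inner_comm]
    exact InnerProductSpace.toDual_symm_apply
  · refine Finset.sum_congr rfl fun i _ => Finset.sum_congr rfl fun j _ => ?_
    rw [iteratedFDeriv_two_apply]
    simp

lemma hasFDerivAt_sq' {E : Type*} [NormedAddCommGroup E] [NormedSpace ℝ E]
    (g : E → ℝ) (y : E) (hgd : DifferentiableAt ℝ g y) :
    HasFDerivAt (fun z => g z ^ 2) ((2 * g y) • fderiv ℝ g y) y := by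
  have h := hgd.hasFDerivAt.mul hgd.hasFDerivAt
  have e : (fun z => g z * g z) = fun z => g z ^ 2 := by funext z; ring
  rw [show g * g = fun z => g z * g z from rfl, e] at h
  refine h.congr_fderiv ?_
  module

lemma hasFDerivAt_inv_comp {E : Type*} [NormedAddCommGroup E] [NormedSpace ℝ E]
    (f : E → ℝ) (y : E) (hfd : DifferentiableAt ℝ f y) (hfy : f y ≠ 0) :
    HasFDerivAt (fun z => (f z)⁻¹)
      ((ContinuousLinearMap.smulRight (1 : ℝ →L[ℝ] ℝ) (-(f y ^ 2)⁻¹)).comp (fderiv ℝ f y)) y :=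
  (hasFDerivAt_inv hfy).comp y hfd.hasFDerivAt

lemma hasFDerivAt_sq_div {E : Type*} [NormedAddCommGroup E] [NormedSpace ℝ E]
    (f g : E → ℝ) (y : E) (hfd : DifferentiableAt ℝ f y) (hgd : DifferentiableAt ℝ g y)
    (hfy : f y ≠ 0) :
    HasFDerivAt (fun z => g z ^ 2 / f z)
      ((2 * g y * (f y)⁻¹) • fderiv ℝ g y + (-(g y ^ 2) * ((f y) ^ 2)⁻¹) • fderiv ℝ f y) y := by
  have h3 := (hasFDerivAt_sq' g y hgd).mul (hasFDerivAt_inv_comp f y hfd hfy)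
  have e : (fun z => g z ^ 2 / f z) = fun z => g z ^ 2 * (f z)⁻¹ := by
    funext z; rw [div_eq_mul_inv]
  rw [e]
  refine h3.congr_fderiv ?_
  ext w
  simp [ContinuousLinearMap.smulRight_apply]
  ring

lemma second_deriv_sq_div {E : Type*} [NormedAddCommGroup E] [NormedSpace ℝ E]
    (f g : E → ℝ) (hf : ContDiff ℝ 2 f) (hg : ContDiff ℝ 2 g) (hfne : ∀ y, f y ≠ 0)
    (x : E) (v w : E) :
    fderiv ℝ (fderiv ℝ (fun z => g z ^ 2 / f z)) x v w =
      2 * (fderiv ℝ g x v) * (fderiv ℝ g x w) * (f x)⁻¹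
      + 2 * g x * (f x)⁻¹ * (fderiv ℝ (fderiv ℝ g) x v w)
      - 2 * g x * (fderiv ℝ g x w) * (fderiv ℝ f x v) * ((f x) ^ 2)⁻¹
      - 2 * g x * (fderiv ℝ g x v) * (fderiv ℝ f x w) * ((f x) ^ 2)⁻¹
      - g x ^ 2 * ((f x) ^ 2)⁻¹ * (fderiv ℝ (fderiv ℝ f) x v w)
      + 2 * g x ^ 2 * (fderiv ℝ f x v) * (fderiv ℝ f x w) * ((f x) ^ 2)⁻¹ * (f x)⁻¹ := by
  have hfd : ∀ y, DifferentiableAt ℝ f y := fun y => (hf.differentiable two_ne_zero).differentiableAt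
  have hgd : ∀ y, DifferentiableAt ℝ g y := fun y => (hg.differentiable two_ne_zero).differentiableAt
  have hfu : fderiv ℝ (fun z => g z ^ 2 / f z) = fun y =>
      (2 * g y * (f y)⁻¹) • fderiv ℝ g y + (-(g y ^ 2) * ((f y) ^ 2)⁻¹) • fderiv ℝ f y :=
    funext fun y => (hasFDerivAt_sq_div f g y (hfd y) (hgd y) (hfne y)).fderiv
  rw [hfu]
  have hF2 : HasFDerivAt (fderiv ℝ f) (fderiv ℝ (fderiv ℝ f) x) x :=
    (((hf.fderiv_right (m := 1) one_add_one_eq_two.le).differentiable one_ne_zero) x).hasFDerivAt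
  have hG2 : HasFDerivAt (fderiv ℝ g) (fderiv ℝ (fderiv ℝ g) x) x :=
    (((hg.fderiv_right (m := 1) one_add_one_eq_two.le).differentiable one_ne_zero) x).hasFDerivAt
  have hc1 := ((hgd x).hasFDerivAt.const_mul (2:ℝ)).mul (hasFDerivAt_inv_comp f x (hfd x) (hfne x))
  have hc2 := (hasFDerivAt_sq' g x (hgd x)).neg.mul
    ((hasFDerivAt_inv (pow_ne_zero 2 (hfne x))).comp x (hasFDerivAt_sq' f x (hfd x)))
  simp only [Function.comp_def] at hc2
  have hΦ := (hc1.smul hG2).add (hc2.smul hF2)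
  rw [HasFDerivAt.fderiv (f := fun y => (2 * g y * (f y)⁻¹) • fderiv ℝ g y
    + (-(g y ^ 2) * ((f y) ^ 2)⁻¹) • fderiv ℝ f y) hΦ]
  simp only [ContinuousLinearMap.add_apply, ContinuousLinearMap.smul_apply,
    ContinuousLinearMap.smulRight_apply, ContinuousLinearMap.comp_apply,
    ContinuousLinearMap.coe_smul', Pi.smul_apply, ContinuousLinearMap.one_apply,
    ContinuousLinearMap.neg_apply, smul_eq_mul, Pi.mul_apply, Pi.neg_apply,
    ContinuousLinearMap.toSpanSingleton_apply]
  have hx := hfne x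
  field_simp
  ring

/-- For `Φ(f) = |Cf|²/f` with `C` a linear (first-order differential) operator, the
generalized Γ operator `Γ_Φ(f) = (1/2)(LΦ(f) − dΦ(f)·Lf)`, with Gateaux derivative
`dΦ(f)·g = 2(Cf·Cg)/f − |Cf|² g/f²`, satisfies the pointwise lower bound
`Γ_Φ(f) ≥ (Cf·[L,C]f)/f` for positive smooth `f`. -/
theorem gammaPhi_square_lower_bound
    (n : ℕ) (b : EuclideanSpace ℝ (Fin n) → EuclideanSpace ℝ (Fin n))
    (Dm : Matrix (Fin n) (Fin n) ℝ) (hD : Dm.PosSemidef)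
    (C : (EuclideanSpace ℝ (Fin n) → ℝ) →ₗ[ℝ] (EuclideanSpace ℝ (Fin n) → ℝ))
    (f : EuclideanSpace ℝ (Fin n) → ℝ) (hfpos : ∀ x, 0 < f x)
    (hf : ContDiff ℝ 2 f) (hCf : ContDiff ℝ 2 (C f)) :
    ∀ x,
      (1 / 2) * (Lgen n b Dm (fun y => (C f y) ^ 2 / f y) x
          - (2 * (C f x * C (Lgen n b Dm f) x) / f x
              - (C f x) ^ 2 * Lgen n b Dm f x / (f x) ^ 2))
      ≥ C f x * (Lgen n b Dm (C f) x - C (Lgen n b Dm f) x) / f x := by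
  intro x
  have hfne : ∀ y, f y ≠ 0 := fun y => (hfpos y).ne'
  have hfd : ∀ y, DifferentiableAt ℝ f y := fun y => (hf.differentiable two_ne_zero).differentiableAt
  have hgd : ∀ y, DifferentiableAt ℝ (C f) y :=
    fun y => (hCf.differentiable two_ne_zero).differentiableAt
  have hLf := Lgen_eq b Dm f x
  have hLg := Lgen_eq b Dm (C f) x
  have hLu := Lgen_eq b Dm (fun y => (C f y) ^ 2 / f y) x
  have hub : fderiv ℝ (fun y => (C f y) ^ 2 / f y) x (b x)
      = 2 * C f x * (f x)⁻¹ * (fderiv ℝ (C f) x (b x))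
        + (-(C f x ^ 2) * ((f x) ^ 2)⁻¹) * (fderiv ℝ f x (b x)) := by
    rw [(hasFDerivAt_sq_div f (C f) x (hfd x) (hgd x) (hfne x)).fderiv]
    simp [ContinuousLinearMap.add_apply, ContinuousLinearMap.smul_apply, smul_eq_mul]
  have hsum : (∑ i : Fin n, ∑ j : Fin n,
        Dm i j * fderiv ℝ (fderiv ℝ (fun y => (C f y) ^ 2 / f y)) x
          (EuclideanSpace.single i 1) (EuclideanSpace.single j 1))
      = 2 * (f x)⁻¹ * (∑ i : Fin n, ∑ j : Fin n, Dm i j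
            * (fderiv ℝ (C f) x (EuclideanSpace.single i 1)
                - C f x * (f x)⁻¹ * fderiv ℝ f x (EuclideanSpace.single i 1))
            * (fderiv ℝ (C f) x (EuclideanSpace.single j 1)
                - C f x * (f x)⁻¹ * fderiv ℝ f x (EuclideanSpace.single j 1)))
        + 2 * C f x * (f x)⁻¹ * (∑ i : Fin n, ∑ j : Fin n, Dm i j
            * fderiv ℝ (fderiv ℝ (C f)) x (EuclideanSpace.single i 1) (EuclideanSpace.single j 1))
        - C f x ^ 2 * ((f x) ^ 2)⁻¹ * (∑ i : Fin n, ∑ j : Fin n, Dm i j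
            * fderiv ℝ (fderiv ℝ f) x (EuclideanSpace.single i 1) (EuclideanSpace.single j 1)) := by
    calc (∑ i : Fin n, ∑ j : Fin n,
        Dm i j * fderiv ℝ (fderiv ℝ (fun y => (C f y) ^ 2 / f y)) x
          (EuclideanSpace.single i 1) (EuclideanSpace.single j 1))
        = ∑ i : Fin n, ∑ j : Fin n,
          (2 * (f x)⁻¹ * (Dm i j
              * (fderiv ℝ (C f) x (EuclideanSpace.single i 1)
                  - C f x * (f x)⁻¹ * fderiv ℝ f x (EuclideanSpace.single i 1))
              * (fderiv ℝ (C f) x (EuclideanSpace.single j 1)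
                  - C f x * (f x)⁻¹ * fderiv ℝ f x (EuclideanSpace.single j 1)))
            + 2 * C f x * (f x)⁻¹ * (Dm i j
                * fderiv ℝ (fderiv ℝ (C f)) x (EuclideanSpace.single i 1)
                    (EuclideanSpace.single j 1))
            - C f x ^ 2 * ((f x) ^ 2)⁻¹ * (Dm i j
                * fderiv ℝ (fderiv ℝ f) x (EuclideanSpace.single i 1)
                    (EuclideanSpace.single j 1))) := by
          refine Finset.sum_congr rfl fun i _ => Finset.sum_congr rfl fun j _ => ?_
          rw [second_deriv_sq_div f (C f) hf hCf hfne x]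
          have hx := hfne x
          field_simp
          ring
      _ = _ := by
          simp only [Finset.sum_add_distrib, Finset.sum_sub_distrib, ← Finset.mul_sum]
  have hS : (0:ℝ) ≤ ∑ i : Fin n, ∑ j : Fin n, Dm i j
      * (fderiv ℝ (C f) x (EuclideanSpace.single i 1)
          - C f x * (f x)⁻¹ * fderiv ℝ f x (EuclideanSpace.single i 1))
      * (fderiv ℝ (C f) x (EuclideanSpace.single j 1)
          - C f x * (f x)⁻¹ * fderiv ℝ f x (EuclideanSpace.single j 1)) := by
    have h := hD.dotProduct_mulVec_nonneg (fun i => fderiv ℝ (C f) x (EuclideanSpace.single i 1)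
      - C f x * (f x)⁻¹ * fderiv ℝ f x (EuclideanSpace.single i 1))
    simp only [star_trivial, dotProduct, Matrix.mulVec, Finset.mul_sum] at h
    refine le_of_le_of_eq h ?_
    refine Finset.sum_congr rfl fun i _ => Finset.sum_congr rfl fun j _ => by ring
  rw [ge_iff_le, ← sub_nonneg, hLu, hub, hsum, hLf, hLg]
  have hS' := mul_nonneg hS (inv_nonneg.2 (hfpos x).le)
  have hx2 : ((f x) ^ 2)⁻¹ = (f x)⁻¹ * (f x)⁻¹ := by
    rw [sq, mul_inv]
  simp only [div_eq_mul_inv]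
  simp only [hx2]
  linarith [hS']
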